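/- Let α satisfy: α(s_i,s_j)=1 implies s_i ∩ s_j ≠ ∅, and for subsets s_i' ⊆ s_i, s_j' ⊆ s_j with α(s_i',s_j')=0 the set (s_i ∩ s_j) \ (s_i' ∩ s_j') is nonempty. Define α-PCH as α but returning conflict additionally whenever (s_i ∩ s_j) ∩ val(C) ≠ ∅. Then α-PCH also satisfies: α-PCH(s_i,s_j)=1 implies s_i ∩ s_j ≠ ∅, and for subsets with α-PCH(s_i',s_j')=0 the set (s_i ∩ s_j) \ (s_i' ∩ s_j') is nonempty. -/
import Mathlib

/-- The α-PCH conflict function: it reports a conflict whenever the overlap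
hits the union of the cluster heads, and otherwise behaves like α. -/
def alphaPCH {U : Type*} [DecidableEq U] (α : Finset U → Finset U → Bool)
    (C : Finset (Finset U)) (s s' : Finset U) : Bool :=
  if ((s ∩ s') ∩ C.biUnion id).Nonempty then true else α s s'

/-- If α satisfies condition (ii) of a well-conditioned function, then so
does α-PCH. -/
theorem stmt_16 {U : Type*} [DecidableEq U] (α : Finset U → Finset U → Bool)
    (hα : ∀ s s' : Finset U, α s s' = true →
      (s ∩ s').Nonempty ∧
        ∀ t ⊆ s, ∀ t' ⊆ s', α t t' = false →
          ((s ∩ s') \ (t ∩ t')).Nonempty)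
    (C : Finset (Finset U)) (si sj : Finset U)
    (h : alphaPCH α C si sj = true) :
    (si ∩ sj).Nonempty ∧
      ∀ si' ⊆ si, ∀ sj' ⊆ sj, alphaPCH α C si' sj' = false →
        ((si ∩ sj) \ (si' ∩ sj')).Nonempty := by
  unfold alphaPCH at h
  by_cases hC : ((si ∩ sj) ∩ C.biUnion id).Nonempty
  · obtain ⟨x, hx⟩ := hC
    rw [Finset.mem_inter] at hx
    refine ⟨⟨x, hx.1⟩, ?_⟩
    intro si' hsi' sj' hsj' hf
    unfold alphaPCH at hf
    split at hf
    · simp at hf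
    · rename_i hne
      refine ⟨x, Finset.mem_sdiff.mpr ⟨hx.1, fun hmem => hne ⟨x, Finset.mem_inter.mpr ⟨hmem, hx.2⟩⟩⟩⟩
  · rw [if_neg hC] at h
    obtain ⟨h1, h2⟩ := hα si sj h
    refine ⟨h1, ?_⟩
    intro si' hsi' sj' hsj' hf
    unfold alphaPCH at hf
    split at hf
    · simp at hf
    · exact h2 si' hsi' sj' hsj' hf
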